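/- arXiv:2509.12070 — 4 statements merged into one kernel-verified Lean document; each statement's English description precedes it below -/
import Mathlib

section
/- For α ∈ (0,1)∪(1,2] and θ ∈ [0,1), the delayed Sibuya distribution DSib(θ, α) has APGF ψ(t) = 1 − (1−ζ)t − ζ t^α for t ∈ [0,2], where ζ = (1−θ)/(1−α). -/
/-- The generalized binomial coefficient `C(α, y) = α(α-1)⋯(α-y+1)/y!`. -/
noncomputable def genChoose (α : ℝ) (y : ℕ) : ℝ :=
  (∏ i ∈ Finset.range y, (α - i)) / (Nat.factorial y)

lemma genChoose_zero (α : ℝ) : genChoose α 0 = 1 := by simp [genChoose]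

lemma genChoose_one (α : ℝ) : genChoose α 1 = α := by simp [genChoose]

lemma genChoose_succ (α : ℝ) (n : ℕ) :
    genChoose α (n + 1) * (n + 1) = (α - n) * genChoose α n := by
  have h1 : ((Nat.factorial n : ℝ)) ≠ 0 := by exact_mod_cast (Nat.factorial_pos n).ne'
  have h2 : ((n : ℝ) + 1) ≠ 0 := by positivity
  rw [genChoose, genChoose, Finset.prod_range_succ, Nat.factorial_succ]
  push_cast
  field_simp

lemma abs_genChoose_succ {α : ℝ} (hα2 : α ≤ 2) (n : ℕ) (hn : 2 ≤ n) :
    |genChoose α (n + 1)| * (n + 1) = ((n : ℝ) - α) * |genChoose α n| := by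
  have h : |genChoose α (n + 1) * (n + 1)| = |(α - n) * genChoose α n| := by
    rw [genChoose_succ]
  rw [abs_mul, abs_mul] at h
  have hn' : α ≤ (n : ℝ) := le_trans hα2 (by exact_mod_cast hn)
  rw [abs_of_nonneg (by positivity : (0:ℝ) ≤ (n:ℝ)+1)] at h
  rw [abs_sub_comm, abs_of_nonneg (by linarith : (0:ℝ) ≤ (n:ℝ) - α)] at h
  exact h

lemma summable_abs_genChoose {α : ℝ} (h0 : 0 < α) (hα2 : α ≤ 2) :
    Summable (fun n => |genChoose α n|) := by
  rw [← summable_nat_add_iff 2]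
  apply summable_of_sum_range_le (c := 2 * |genChoose α 2| / α)
    (fun n => abs_nonneg _)
  intro K
  have key : ∀ k : ℕ, α * |genChoose α (k + 2)| =
      ((k : ℝ) + 2) * |genChoose α (k + 2)| - ((k : ℝ) + 3) * |genChoose α (k + 3)| := by
    intro k
    have := abs_genChoose_succ hα2 (k + 2) (by omega)
    push_cast at this ⊢
    linarith [this]
  have tele : ∀ K : ℕ, ∑ k ∈ Finset.range K, (α * |genChoose α (k + 2)|) =
      2 * |genChoose α 2| - ((K : ℝ) + 2) * |genChoose α (K + 2)| := by
    intro K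
    induction K with
    | zero => norm_num
    | succ K ih =>
      rw [Finset.sum_range_succ, ih, key K]
      push_cast
      ring_nf
  have hb : α * ∑ k ∈ Finset.range K, |genChoose α (k + 2)| ≤ 2 * |genChoose α 2| := by
    rw [Finset.mul_sum]
    rw [tele K]
    have : (0:ℝ) ≤ ((K : ℝ) + 2) * |genChoose α (K + 2)| := by positivity
    linarith
  rw [le_div_iff₀ h0]
  linarith [hb]

lemma abs_genChoose_le {α : ℝ} (h0 : 0 < α) (hα2 : α ≤ 2) (n : ℕ) :
    |genChoose α n| ≤ |genChoose α 0| + |genChoose α 1| + |genChoose α 2| := by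
  have mono : ∀ k : ℕ, |genChoose α (k + 2)| ≤ |genChoose α 2| := by
    intro k
    induction k with
    | zero => exact le_refl _
    | succ k ih =>
      have h := abs_genChoose_succ hα2 (k + 2) (by omega)
      have hk : α ≤ (k : ℝ) + 2 := by
        have hk2 : (0:ℝ) ≤ (k:ℝ) := Nat.cast_nonneg k
        linarith
      nlinarith [abs_nonneg (genChoose α (k + 2)), abs_nonneg (genChoose α (k + 3))]
  match n with
  | 0 => nlinarith [abs_nonneg (genChoose α 1), abs_nonneg (genChoose α 2)]
  | 1 => nlinarith [abs_nonneg (genChoose α 0), abs_nonneg (genChoose α 2)]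
  | (k + 2) =>
      have := mono k
      nlinarith [abs_nonneg (genChoose α 0), abs_nonneg (genChoose α 1)]

lemma summable_genChoose_mul_pow {α : ℝ} (h0 : 0 < α) (hα2 : α ≤ 2) {v : ℝ} (hv : |v| ≤ 1) :
    Summable (fun n => genChoose α n * v ^ n) := by
  apply Summable.of_norm_bounded (summable_abs_genChoose h0 hα2)
  intro n
  rw [Real.norm_eq_abs, abs_mul, abs_pow]
  calc |genChoose α n| * |v| ^ n ≤ |genChoose α n| * 1 ^ n := by
        apply mul_le_mul_of_nonneg_left (pow_le_pow_left₀ (abs_nonneg v) hv n) (abs_nonneg _)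
    _ = |genChoose α n| := by simp

lemma summable_deriv_bound {α : ℝ} (h0 : 0 < α) (hα2 : α ≤ 2) {r : ℝ} (hr0 : 0 ≤ r)
    (hr1 : r < 1) :
    Summable (fun n : ℕ => (|genChoose α 0| + |genChoose α 1| + |genChoose α 2|)
      * ((n : ℝ) * r ^ (n - 1))) := by
  apply Summable.mul_left
  rw [← summable_nat_add_iff 1]
  simp only [Nat.add_sub_cancel]
  have h1 : Summable (fun n : ℕ => ((n : ℝ)) * r ^ n) := by
    simpa using summable_pow_mul_geometric_of_norm_lt_one 1
      (by rw [Real.norm_eq_abs, abs_of_nonneg hr0]; exact hr1)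
  have h2 : Summable (fun n : ℕ => r ^ n) :=
    summable_geometric_of_lt_one hr0 hr1
  simpa [add_mul] using h1.add h2

variable {α : ℝ}

/-- bound on the derivative terms -/
lemma deriv_term_bound (h0 : 0 < α) (hα2 : α ≤ 2) {r x : ℝ} (hx : |x| ≤ r) (n : ℕ) :
    ‖genChoose α n * ((n : ℝ) * x ^ (n - 1))‖ ≤
      (|genChoose α 0| + |genChoose α 1| + |genChoose α 2|) * ((n : ℝ) * r ^ (n - 1)) := by
  have hr0 : 0 ≤ r := le_trans (abs_nonneg x) hx
  rw [Real.norm_eq_abs, abs_mul, abs_mul, abs_pow, Nat.abs_cast]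
  have h1 : |x| ^ (n - 1) ≤ r ^ (n - 1) := pow_le_pow_left₀ (abs_nonneg x) hx _
  have h2 := abs_genChoose_le h0 hα2 n
  have hc : (0:ℝ) ≤ |genChoose α n| := abs_nonneg _
  have hn : (0:ℝ) ≤ (n:ℝ) := Nat.cast_nonneg n
  calc |genChoose α n| * ((n:ℝ) * |x| ^ (n - 1))
      ≤ (|genChoose α 0| + |genChoose α 1| + |genChoose α 2|) * ((n:ℝ) * |x| ^ (n - 1)) := by
        apply mul_le_mul_of_nonneg_right h2
        positivity
    _ ≤ (|genChoose α 0| + |genChoose α 1| + |genChoose α 2|) * ((n:ℝ) * r ^ (n - 1)) := by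
        apply mul_le_mul_of_nonneg_left _ (by positivity)
        exact mul_le_mul_of_nonneg_left h1 hn
lemma summable_deriv_term (h0 : 0 < α) (hα2 : α ≤ 2) {v : ℝ} (hv : |v| < 1) :
    Summable (fun n : ℕ => genChoose α n * ((n : ℝ) * v ^ (n - 1))) := by
  apply Summable.of_norm_bounded (summable_deriv_bound h0 hα2 (abs_nonneg v) hv)
  exact fun n => deriv_term_bound h0 hα2 le_rfl n

lemma hasDerivAt_g (h0 : 0 < α) (hα2 : α ≤ 2) {v : ℝ} (hv : |v| < 1) :
    HasDerivAt (fun x => ∑' n, genChoose α n * x ^ n)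
      (∑' n, genChoose α n * ((n : ℝ) * v ^ (n - 1))) v := by
  set r : ℝ := (|v| + 1) / 2 with hr
  have hr0 : 0 ≤ r := by positivity
  have hr1 : r < 1 := by rw [hr]; linarith [hv]
  have hvr : |v| < r := by rw [hr]; linarith [abs_nonneg v]
  have hrpos : 0 < r := by rw [hr]; positivity
  have h0mem : (0:ℝ) ∈ Set.Ioo (-r) r := ⟨by linarith, hrpos⟩
  have hvmem : v ∈ Set.Ioo (-r) r := abs_lt.mp hvr |> fun h => ⟨h.1, h.2⟩
  exact hasDerivAt_tsum_of_isPreconnected (summable_deriv_bound h0 hα2 hr0 hr1)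
    (isOpen_Ioo (a := -r) (b := r)) (Convex.isPreconnected (convex_Ioo _ _))
    (fun n y _ => (hasDerivAt_pow n y).const_mul (genChoose α n))
    (fun n y hy => deriv_term_bound h0 hα2 (le_of_lt (abs_lt.mpr ⟨hy.1, hy.2⟩)) n)
    h0mem (summable_genChoose_mul_pow h0 hα2 (by simp)) hvmem

lemma summable_shift (h0 : 0 < α) (hα2 : α ≤ 2) {v : ℝ} (hv : |v| < 1) :
    Summable (fun n : ℕ => genChoose α (n + 1) * (((n : ℝ) + 1) * v ^ n)) := by
  have := (summable_nat_add_iff 1).2 (summable_deriv_term h0 hα2 hv)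
  apply this.congr
  intro n
  push_cast
  norm_num

lemma summable_n_term (h0 : 0 < α) (hα2 : α ≤ 2) {v : ℝ} (hv : |v| < 1) :
    Summable (fun n : ℕ => genChoose α n * ((n : ℝ) * v ^ n)) := by
  have hbig : Summable (fun n : ℕ => (|genChoose α 0| + |genChoose α 1| + |genChoose α 2|)
      * ((n : ℝ) * |v| ^ n)) := by
    apply Summable.mul_left
    simpa using summable_pow_mul_geometric_of_norm_lt_one 1
      (by rw [Real.norm_eq_abs, abs_abs]; exact hv)
  apply Summable.of_norm_bounded hbig
  intro n
  rw [Real.norm_eq_abs, abs_mul, abs_mul, abs_pow, Nat.abs_cast]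
  apply mul_le_mul_of_nonneg_right (abs_genChoose_le h0 hα2 n) (by positivity)

lemma ode (h0 : 0 < α) (hα2 : α ≤ 2) {v : ℝ} (hv : |v| < 1) :
    (1 + v) * (∑' n, genChoose α n * ((n : ℝ) * v ^ (n - 1)))
      = α * ∑' n, genChoose α n * v ^ n := by
  have Sd := summable_deriv_term h0 hα2 hv
  have Ssh := summable_shift h0 hα2 hv
  have Sn := summable_n_term h0 hα2 hv
  have e1 : (∑' n, genChoose α n * ((n : ℝ) * v ^ (n - 1)))
      = ∑' n : ℕ, genChoose α (n + 1) * (((n : ℝ) + 1) * v ^ n) := by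
    rw [Summable.tsum_eq_zero_add Sd]
    simp only [Nat.cast_zero, zero_mul, mul_zero, zero_add]
    apply tsum_congr; intro n; push_cast; norm_num
  have e2 : v * (∑' n : ℕ, genChoose α (n + 1) * (((n : ℝ) + 1) * v ^ n))
      = ∑' n, genChoose α n * ((n : ℝ) * v ^ n) := by
    rw [← tsum_mul_left, Summable.tsum_eq_zero_add Sn]
    simp only [Nat.cast_zero, zero_mul, mul_zero, zero_add]
    apply tsum_congr; intro n; push_cast; ring
  rw [e1, add_mul, one_mul, e2]
  rw [← Summable.tsum_add Ssh Sn]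
  rw [← tsum_mul_left]
  apply tsum_congr
  intro n
  have hrec := genChoose_succ α n
  push_cast at hrec
  have h3 : genChoose α (n + 1) * (((n:ℝ) + 1) * v ^ n)
      = ((α - (n:ℝ)) * genChoose α n) * v ^ n := by rw [← hrec]; ring
  rw [h3]; ring

lemma g_zero : (∑' n, genChoose α n * (0:ℝ) ^ n) = 1 := by
  rw [tsum_eq_single 0]
  · simp [genChoose_zero]
  · intro n hn
    simp [zero_pow hn]

lemma hasDerivAt_quot (h0 : 0 < α) (hα2 : α ≤ 2) {x : ℝ} (hx : |x| < 1) :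
    HasDerivAt (fun y => (∑' n, genChoose α n * y ^ n) * (1 + y) ^ (-α)) 0 x := by
  have hP : (0:ℝ) < 1 + x := by have := abs_lt.mp hx; linarith [this.1]
  have hg := hasDerivAt_g h0 hα2 hx
  have hpow : HasDerivAt (fun y : ℝ => (1 + y) ^ (-α))
      (-α * (1 + x) ^ (-α - 1) * 1) x := by
    have h1 : HasDerivAt (fun y : ℝ => 1 + y) 1 x := by
      simpa using (hasDerivAt_id x).const_add 1
    exact (Real.hasDerivAt_rpow_const (p := -α) (Or.inl hP.ne')).comp x h1
  have := hg.mul hpow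
  refine this.congr_deriv (Eq.symm ?_)
  have key := ode h0 hα2 hx
  have hsplit : (1 + x) ^ (-α - 1) * (1 + x) = (1 + x) ^ (-α) := by
    nth_rewrite 2 [← Real.rpow_one (1 + x)]
    rw [← Real.rpow_add hP]
    norm_num
  rw [← hsplit]
  linear_combination (-((1 + x) ^ (-α - 1))) * key

lemma binomial_Ioo (h0 : 0 < α) (hα2 : α ≤ 2) {v : ℝ} (hv : |v| < 1) :
    (∑' n, genChoose α n * v ^ n) = (1 + v) ^ α := by
  have hP : (0:ℝ) < 1 + v := by have := abs_lt.mp hv; linarith [this.1]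
  set h : ℝ → ℝ := fun y => (∑' n, genChoose α n * y ^ n) * (1 + y) ^ (-α) with hh
  have habs : ∀ x : ℝ, x ∈ Set.Icc (-|v|) (|v|) → |x| < 1 := by
    intro x hx
    rw [abs_lt]
    constructor <;> [linarith [hx.1, hv, abs_nonneg v]; linarith [hx.2, hv]]
  have hcont : ContinuousOn h (Set.Icc (-|v|) (|v|)) := fun x hx =>
    ((hasDerivAt_quot h0 hα2 (habs x hx)).continuousAt).continuousWithinAt
  have hderiv : ∀ x ∈ Set.Ico (-|v|) (|v|), HasDerivWithinAt h 0 (Set.Ici x) x := by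
    intro x hx
    exact (hasDerivAt_quot h0 hα2 (habs x ⟨hx.1, hx.2.le⟩)).hasDerivWithinAt
  have hv0 : h v = h (-|v|) := by
    apply constant_of_has_deriv_right_zero hcont hderiv
    exact ⟨neg_abs_le v, le_abs_self v⟩
  have h00 : h 0 = h (-|v|) := by
    apply constant_of_has_deriv_right_zero hcont hderiv
    exact ⟨by simp [abs_nonneg v], abs_nonneg v⟩
  have hconst : h v = h 0 := by rw [hv0, ← h00]
  have hz : h 0 = 1 := by
    rw [hh]
    simp only []
    rw [g_zero]
    norm_num
  have := hconst.trans hz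
  rw [hh] at this
  simp only [] at this
  have hpn : (1 + v) ^ (-α) = ((1 + v) ^ α)⁻¹ := by
    rw [Real.rpow_neg hP.le]
  rw [hpn] at this
  have hppos : (0:ℝ) < (1 + v) ^ α := Real.rpow_pos_of_pos hP α
  field_simp at this
  linarith [this]

lemma continuousOn_g (h0 : 0 < α) (hα2 : α ≤ 2) :
    ContinuousOn (fun x : ℝ => ∑' n, genChoose α n * x ^ n) (Set.Icc (-1 : ℝ) 1) := by
  apply (tendstoUniformlyOn_tsum (summable_abs_genChoose h0 hα2) ?_).continuousOn
  · refine Filter.Eventually.frequently (Filter.Eventually.of_forall ?_)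
    intro N
    exact (continuous_finset_sum _ fun n _ =>
      continuous_const.mul (continuous_pow n)).continuousOn
  · intro n x hx
    rw [Real.norm_eq_abs, abs_mul, abs_pow]
    have hx1 : |x| ≤ 1 := abs_le.mpr ⟨hx.1, hx.2⟩
    calc |genChoose α n| * |x| ^ n ≤ |genChoose α n| * 1 ^ n :=
          mul_le_mul_of_nonneg_left (pow_le_pow_left₀ (abs_nonneg x) hx1 n) (abs_nonneg _)
      _ = |genChoose α n| := by simp

lemma binomial_Icc (h0 : 0 < α) (hα2 : α ≤ 2) {v : ℝ} (hv : v ∈ Set.Icc (-1 : ℝ) 1) :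
    (∑' n, genChoose α n * v ^ n) = (1 + v) ^ α := by
  have hclo : v ∈ closure (Set.Ioo (-1 : ℝ) 1) := by
    rw [closure_Ioo (by norm_num : (-1:ℝ) ≠ 1)]
    exact hv
  have hne : (nhdsWithin v (Set.Ioo (-1 : ℝ) 1)).NeBot :=
    mem_closure_iff_nhdsWithin_neBot.mp hclo
  have T1 : Filter.Tendsto (fun x : ℝ => ∑' n, genChoose α n * x ^ n)
      (nhdsWithin v (Set.Ioo (-1 : ℝ) 1)) (nhds (∑' n, genChoose α n * v ^ n)) := by
    have := (continuousOn_g h0 hα2) v hv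
    exact this.mono_left (nhdsWithin_mono v Set.Ioo_subset_Icc_self)
  have T1' : Filter.Tendsto (fun x : ℝ => (1 + x) ^ α)
      (nhdsWithin v (Set.Ioo (-1 : ℝ) 1)) (nhds (∑' n, genChoose α n * v ^ n)) := by
    apply T1.congr'
    filter_upwards [self_mem_nhdsWithin] with x hx
    exact binomial_Ioo h0 hα2 (abs_lt.mpr ⟨hx.1, hx.2⟩)
  have T2 : Filter.Tendsto (fun x : ℝ => (1 + x) ^ α)
      (nhdsWithin v (Set.Ioo (-1 : ℝ) 1)) (nhds ((1 + v) ^ α)) := by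
    have hc : ContinuousAt (fun x : ℝ => (1 + x) ^ α) v :=
      ContinuousAt.rpow_const ((continuous_const.add continuous_id).continuousAt)
        (Or.inr h0.le)
    exact hc.continuousWithinAt
  exact tendsto_nhds_unique T1' T2

set_option maxHeartbeats 1000000 in
/-- the delayed Sibuya distribution `DSib(θ, α)` with `α ∈ (0,1)∪(1,2]`,
`θ ∈ [0,1)`, having pmf `p(1) = θ` and `p(y) = (-1)^(y+1)((1-θ)/(1-α))C(α,y)` for
`y ≥ 2`, has APGF `ψ(t) = 1 - (1-ζ)t - ζt^α` where `ζ = (1-θ)/(1-α)`, for `t ∈ [0,2]`. -/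
theorem delayedSibuya_apgf (α θ : ℝ)
    (hα : α ∈ Set.Ioo (0 : ℝ) 1 ∪ Set.Ioc (1 : ℝ) 2) (hθ : θ ∈ Set.Ico (0 : ℝ) 1)
    (t : ℝ) (ht : t ∈ Set.Icc (0 : ℝ) 2) :
    θ * (1 - t) +
      ∑' y : ℕ, ((-1 : ℝ) ^ ((y + 2) + 1) * ((1 - θ) / (1 - α)) * genChoose α (y + 2))
        * (1 - t) ^ (y + 2)
      = 1 - (1 - (1 - θ) / (1 - α)) * t - ((1 - θ) / (1 - α)) * t ^ α := by
  have h0 : 0 < α := by rcases hα with h | h; exacts [h.1, lt_trans one_pos h.1]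
  have h2 : α ≤ 2 := by rcases hα with h | h; exacts [le_trans h.2.le one_le_two, h.2]
  have h1 : α ≠ 1 := by rcases hα with h | h; exacts [ne_of_lt h.2, ne_of_gt h.1]
  set ζ : ℝ := (1 - θ) / (1 - α) with hζ
  set v : ℝ := t - 1 with hvdef
  have hv : v ∈ Set.Icc (-1 : ℝ) 1 := ⟨by simp [hvdef]; linarith [ht.1], by simp [hvdef]; linarith [ht.2]⟩
  have hvabs : |v| ≤ 1 := abs_le.mpr ⟨hv.1, hv.2⟩
  have hsum : Summable (fun n => genChoose α n * v ^ n) :=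
    summable_genChoose_mul_pow h0 h2 hvabs
  have hsum1 : Summable (fun n => genChoose α (n + 1) * v ^ (n + 1)) :=
    (summable_nat_add_iff 1).2 hsum
  have hg : (∑' n, genChoose α n * v ^ n) = t ^ α := by
    rw [binomial_Icc h0 h2 hv]
    norm_num [hvdef]
  have htail : (∑' y : ℕ, genChoose α (y + 2) * v ^ (y + 2)) = t ^ α - 1 - α * v := by
    have e1 := Summable.tsum_eq_zero_add hsum
    have e2 := Summable.tsum_eq_zero_add hsum1
    rw [e2, genChoose_one] at e1
    rw [hg] at e1
    simp only [genChoose_zero, pow_zero, mul_one, pow_one] at e1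
    have e3 : (∑' b : ℕ, genChoose α (b + 1 + 1) * v ^ (b + 1 + 1))
        = ∑' y : ℕ, genChoose α (y + 2) * v ^ (y + 2) := by
      apply tsum_congr; intro b; norm_num
    rw [e3] at e1
    norm_num at e1
    linarith [e1]
  have hterm : ∀ y : ℕ,
      ((-1 : ℝ) ^ ((y + 2) + 1) * ζ * genChoose α (y + 2)) * (1 - t) ^ (y + 2)
        = -ζ * (genChoose α (y + 2) * v ^ (y + 2)) := by
    intro y
    have hAA : ((-1 : ℝ)) ^ (y + 2) * ((-1 : ℝ)) ^ (y + 2) = 1 := by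
      rw [← mul_pow]; norm_num
    have h1t : ((1 : ℝ) - t) ^ (y + 2) = (-1 : ℝ) ^ (y + 2) * v ^ (y + 2) := by
      rw [← mul_pow, hvdef]; ring_nf
    rw [h1t, pow_succ]
    linear_combination (-(ζ * genChoose α (y + 2) * v ^ (y + 2))) * hAA
  calc θ * (1 - t) +
      ∑' y : ℕ, ((-1 : ℝ) ^ ((y + 2) + 1) * ζ * genChoose α (y + 2)) * (1 - t) ^ (y + 2)
      = θ * (1 - t) + ∑' y : ℕ, -ζ * (genChoose α (y + 2) * v ^ (y + 2)) := by
        rw [tsum_congr hterm]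
    _ = θ * (1 - t) + -ζ * (t ^ α - 1 - α * v) := by rw [tsum_mul_left, htail]
    _ = 1 - (1 - ζ) * t - ζ * t ^ α := by
        rw [hζ, hvdef]
        have hne : (1 : ℝ) - α ≠ 0 := fun h => h1 (by linarith)
        field_simp
        ring
end

section
/- For θ ∈ [0,1), the delayed Sibuya distribution DSib(θ, 1), with pmf p(1) = θ and p(y) = (1−θ)/((y−1)y) for y ≥ 2, has APGF ψ(t) = 1 − t + (1−θ) t log t for t ∈ (0,2], with ψ(0) = 1. -/
open Real Filter Topology

lemma sib_summable : Summable (fun y : ℕ => (1 : ℝ) / ((y + 1) * (y + 2))) := by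
  have h : Summable (fun y : ℕ => (1 : ℝ) / (y + 1) ^ 2) := by
    have := Real.summable_one_div_nat_pow (p := 2) |>.mpr (by norm_num)
    exact_mod_cast (summable_nat_add_iff 1).mpr this
  apply Summable.of_nonneg_of_le (fun y => by positivity) _ h
  intro y
  apply div_le_div_of_nonneg_left (by norm_num) (by positivity)
  have : ((y : ℝ) + 1) ≤ (y : ℝ) + 2 := by linarith
  nlinarith [Nat.cast_nonneg (α := ℝ) y]

lemma sib_hasSum_one : HasSum (fun y : ℕ => (1 : ℝ) / ((y + 1) * (y + 2))) 1 := by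
  rw [(hasSum_iff_tendsto_nat_of_nonneg (fun y => by positivity) 1)]
  have key : ∀ n : ℕ, ∑ i ∈ Finset.range n, (1 : ℝ) / ((i + 1) * (i + 2))
      = 1 - 1 / (n + 1) := by
    intro n
    induction n with
    | zero => simp
    | succ k ih =>
      rw [Finset.sum_range_succ, ih]
      have h1 : ((k : ℝ) + 1) ≠ 0 := by positivity
      have h2 : ((k : ℝ) + 2) ≠ 0 := by positivity
      push_cast
      field_simp
      ring
  simp only [key]
  have : Tendsto (fun n : ℕ => 1 / ((n : ℝ) + 1)) atTop (𝓝 0) :=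
    tendsto_one_div_add_atTop_nhds_zero_nat
  simpa using tendsto_const_nhds.sub this

lemma sib_hasSum (x : ℝ) (hx : |x| < 1) :
    HasSum (fun y : ℕ => x ^ (y + 2) / ((y + 1) * (y + 2)))
      (x + (1 - x) * Real.log (1 - x)) := by
  have h1 : HasSum (fun n : ℕ => x ^ (n + 1) / (n + 1)) (-Real.log (1 - x)) :=
    Real.hasSum_pow_div_log_of_abs_lt_one hx
  have h2 : HasSum (fun n : ℕ => x * (x ^ (n + 1) / (n + 1))) (x * (-Real.log (1 - x))) :=
    h1.mul_left x
  have h3 : HasSum (fun n : ℕ => x ^ (n + 1 + 1) / (n + 1 + 1))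
      (-Real.log (1 - x) - x) := by
    have h3' := (hasSum_nat_add_iff' (f := fun n : ℕ => x ^ (n + 1) / (n + 1)) 1).mpr h1
    simpa using h3'
  have h4 := h2.sub h3
  have heq : (fun n : ℕ => x * (x ^ (n + 1) / (n + 1)) - x ^ (n + 1 + 1) / (n + 1 + 1))
      = fun y : ℕ => x ^ (y + 2) / ((y + 1) * (y + 2)) := by
    funext n
    have h1' : ((n : ℝ) + 1) ≠ 0 := by positivity
    have h2' : ((n : ℝ) + 2) ≠ 0 := by positivity
    have : (n : ℝ) + 1 + 1 = (n : ℝ) + 2 := by ring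
    rw [this]
    field_simp
    ring
  rw [heq] at h4
  convert h4 using 1
  push_cast
  · rfl
  ring

noncomputable def sibF (x : ℝ) : ℝ := ∑' y : ℕ, x ^ (y + 2) / ((y + 1) * (y + 2))

lemma sibF_cont : ContinuousOn sibF (Set.Icc (-1 : ℝ) 1) := by
  apply continuousOn_tsum (u := fun y : ℕ => (1 : ℝ) / ((y + 1) * (y + 2)))
  · intro i
    exact (continuous_pow (i + 2)).continuousOn.div_const _
  · exact sib_summable
  · intro n x hx
    rw [Real.norm_eq_abs, abs_div]
    have hden : |((n : ℝ) + 1) * ((n : ℝ) + 2)| = ((n : ℝ) + 1) * ((n : ℝ) + 2) := by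
      apply abs_of_pos; positivity
    rw [hden]
    rw [abs_pow]
    have hnum : |x| ^ (n + 2) ≤ 1 := pow_le_one₀ (abs_nonneg x) (abs_le.mpr ⟨hx.1, hx.2⟩)
    gcongr

lemma sibF_neg_one : sibF (-1) = -1 + 2 * Real.log 2 := by
  have hmem : (-1 : ℝ) ∈ Set.Icc (-1 : ℝ) 1 := by norm_num
  have hcont : ContinuousWithinAt sibF (Set.Ioo (-1 : ℝ) 1) (-1) :=
    (sibF_cont (-1) hmem).mono Set.Ioo_subset_Icc_self
  have hne : (𝓝[Set.Ioo (-1 : ℝ) 1] (-1)).NeBot := by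
    apply mem_closure_iff_nhdsWithin_neBot.mp
    rw [closure_Ioo (by norm_num : (-1 : ℝ) ≠ 1)]
    exact hmem
  have hg : Tendsto (fun x : ℝ => x + (1 - x) * Real.log (1 - x))
      (𝓝[Set.Ioo (-1 : ℝ) 1] (-1)) (𝓝 (-1 + 2 * Real.log 2)) := by
    have : ContinuousAt (fun x : ℝ => x + (1 - x) * Real.log (1 - x)) (-1) := by
      apply ContinuousAt.add continuousAt_id
      apply ContinuousAt.mul (by fun_prop)
      exact (Real.continuousAt_log (by norm_num)).comp (by fun_prop)
    have h2 := (this.continuousWithinAt (s := Set.Ioo (-1 : ℝ) 1)).tendsto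
    have hval : (-1 : ℝ) + (1 - (-1)) * Real.log (1 - (-1)) = -1 + 2 * Real.log 2 := by
      norm_num
    rwa [hval] at h2
  have hF : Tendsto sibF (𝓝[Set.Ioo (-1 : ℝ) 1] (-1)) (𝓝 (sibF (-1))) := hcont.tendsto
  have heq : Tendsto sibF (𝓝[Set.Ioo (-1 : ℝ) 1] (-1)) (𝓝 (-1 + 2 * Real.log 2)) := by
    apply hg.congr'
    filter_upwards [self_mem_nhdsWithin] with x hx
    have hax : |x| < 1 := abs_lt.mpr ⟨hx.1, hx.2⟩
    exact ((sib_hasSum x hax).tsum_eq).symm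
  exact tendsto_nhds_unique hF heq

/-- the delayed Sibuya distribution `DSib(θ, 1)`, with pmf `p(1) = θ`
and `p(y) = (1-θ)/((y-1)y)` for `y ≥ 2`, has APGF `ψ(t) = 1 - t + (1-θ)t log t`
for `t ∈ (0,2]`, with `ψ(0) = 1`. -/
theorem delayedSibuya_one_apgf (θ : ℝ) (hθ : θ ∈ Set.Ico (0 : ℝ) 1) :
    (∀ t ∈ Set.Ioc (0 : ℝ) 2,
      θ * (1 - t) +
        ∑' y : ℕ, ((1 - θ) / (((y + 2 : ℝ) - 1) * (y + 2 : ℝ))) * (1 - t) ^ (y + 2)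
        = 1 - t + (1 - θ) * t * Real.log t) ∧
    (θ * (1 - 0) +
        ∑' y : ℕ, ((1 - θ) / (((y + 2 : ℝ) - 1) * (y + 2 : ℝ))) * (1 - 0) ^ (y + 2)
        = 1) := by
  have hterm : ∀ (t : ℝ) (y : ℕ),
      ((1 - θ) / (((y + 2 : ℝ) - 1) * (y + 2 : ℝ))) * (1 - t) ^ (y + 2)
      = (1 - θ) * ((1 - t) ^ (y + 2) / (((y : ℝ) + 1) * ((y : ℝ) + 2))) := by
    intro t y
    have : ((y : ℝ) + 2) - 1 = (y : ℝ) + 1 := by ring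
    rw [this]; ring
  constructor
  · intro t ht
    rcases eq_or_lt_of_le ht.2 with h2 | h2
    · -- t = 2
      subst h2
      have : ∑' y : ℕ, ((1 - θ) / (((y + 2 : ℝ) - 1) * (y + 2 : ℝ))) * (1 - 2) ^ (y + 2)
          = (1 - θ) * sibF (-1) := by
        rw [sibF, ← tsum_mul_left]
        congr 1; funext y
        rw [hterm]; norm_num
      rw [this, sibF_neg_one]
      ring
    · -- 0 < t < 2
      have hx : |1 - t| < 1 := abs_lt.mpr ⟨by linarith [ht.1], by linarith [ht.1]⟩
      have hs := (sib_hasSum (1 - t) hx).mul_left (1 - θ)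
      have : ∑' y : ℕ, ((1 - θ) / (((y + 2 : ℝ) - 1) * (y + 2 : ℝ))) * (1 - t) ^ (y + 2)
          = (1 - θ) * ((1 - t) + (1 - (1 - t)) * Real.log (1 - (1 - t))) := by
        rw [← hs.tsum_eq]
        congr 1; funext y
        exact hterm t y
      rw [this]
      have : (1 : ℝ) - (1 - t) = t := by ring
      rw [this]
      ring
  · have : ∑' y : ℕ, ((1 - θ) / (((y + 2 : ℝ) - 1) * (y + 2 : ℝ))) * (1 - 0) ^ (y + 2)
        = (1 - θ) * 1 := by
      rw [← (sib_hasSum_one.mul_left (1 - θ)).tsum_eq]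
      congr 1; funext y
      rw [hterm]; norm_num
    rw [this]; ring
end

section
/- Let X be a non-negative integer-valued random variable that is not Poisson distributed (including not a point mass at 0), with factorial cumulant generating function C(t) = log E[(1−t)^X] continuous on [0,2] with C(0)=0. If a ∈ [0,1] and b ∈ ℝ satisfy C(at) − bt = C(t) for all t ∈ [0,2], then a = 1 and b = 0. -/
open scoped ENNReal NNReal

/-- The factorial cumulant generating function `C(t) = log E[(1-t)^X]`. -/
noncomputable def fcgf (p : PMF ℕ) (t : ℝ) : ℝ :=
  Real.log (∑' n : ℕ, (p n).toReal * (1 - t) ^ n)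

section Aux

private lemma shift_summable {c : ℕ → ℝ} (hc0 : ∀ n, 0 ≤ c n) (hcs : Summable c)
    (k : ℕ) {s : ℝ} (hs0 : 0 ≤ s) (hs1 : s ≤ 1) :
    Summable (fun n => c (n + k) * s ^ n) := by
  have h1 : Summable (fun n => c (n + k)) := (summable_nat_add_iff k).2 hcs
  refine h1.of_nonneg_of_le (fun n => mul_nonneg (hc0 _) (pow_nonneg hs0 _)) (fun n => ?_)
  exact mul_le_of_le_one_right (hc0 _) (pow_le_one₀ hs0 hs1)

private lemma shift_bound {c : ℕ → ℝ} (hc0 : ∀ n, 0 ≤ c n) (hcs : Summable c)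
    (k : ℕ) {s : ℝ} (hs0 : 0 ≤ s) (hs1 : s ≤ 1) :
    ∑' n, c (n + k) * s ^ n ≤ ∑' n, c n := by
  have h1 : Summable (fun n => c (n + k)) := (summable_nat_add_iff k).2 hcs
  calc ∑' n, c (n + k) * s ^ n ≤ ∑' n, c (n + k) := by
        refine Summable.tsum_le_tsum (fun n => ?_) (shift_summable hc0 hcs k hs0 hs1) h1
        exact mul_le_of_le_one_right (hc0 _) (pow_le_one₀ hs0 hs1)
    _ ≤ ∑' n, c n := by
        refine Summable.tsum_le_tsum_of_inj (fun n => n + k) (add_left_injective k)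
          (fun m _ => hc0 m) (fun n => le_rfl) h1 hcs

private lemma shift_split {c : ℕ → ℝ} (hc0 : ∀ n, 0 ≤ c n) (hcs : Summable c)
    (k : ℕ) {s : ℝ} (hs0 : 0 ≤ s) (hs1 : s ≤ 1) :
    ∑' n, c (n + k) * s ^ n = c k + s * ∑' n, c (n + (k + 1)) * s ^ n := by
  rw [Summable.tsum_eq_zero_add (shift_summable hc0 hcs k hs0 hs1)]
  simp only [zero_add, pow_zero, mul_one]
  congr 1
  rw [← tsum_mul_left]
  refine tsum_congr (fun n => ?_)
  have : n + 1 + k = n + (k + 1) := by omega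
  rw [this, pow_succ]
  ring

private lemma coeff_eq {c d : ℕ → ℝ} (hc0 : ∀ n, 0 ≤ c n) (hd0 : ∀ n, 0 ≤ d n)
    (hcs : Summable c) (hds : Summable d)
    (h : ∀ s ∈ Set.Ioc (0 : ℝ) 1, ∑' n, c n * s ^ n = ∑' n, d n * s ^ n) :
    ∀ k, c k = d k := by
  set M : ℝ := (∑' n, c n) + (∑' n, d n) with hM
  -- step 1 : from the k-shifted equality we get equality of the k-th coefficients
  have step1 : ∀ k, (∀ s ∈ Set.Ioc (0 : ℝ) 1,
      ∑' n, c (n + k) * s ^ n = ∑' n, d (n + k) * s ^ n) → c k = d k := by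
    intro k hk
    have hbound : ∀ s ∈ Set.Ioc (0 : ℝ) 1, |c k - d k| ≤ M * s := by
      intro s hs
      have hs0 : (0 : ℝ) ≤ s := hs.1.le
      have hs1 : s ≤ 1 := hs.2
      have h1 := hk s hs
      rw [shift_split hc0 hcs k hs0 hs1, shift_split hd0 hds k hs0 hs1] at h1
      have h2 : c k - d k =
          s * (∑' n, d (n + (k + 1)) * s ^ n) - s * (∑' n, c (n + (k + 1)) * s ^ n) := by
        linarith
      rw [h2]
      have hA : |∑' n, c (n + (k + 1)) * s ^ n| ≤ ∑' n, c n := by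
        rw [abs_of_nonneg (tsum_nonneg (fun n => mul_nonneg (hc0 _) (pow_nonneg hs0 _)))]
        exact shift_bound hc0 hcs (k + 1) hs0 hs1
      have hB : |∑' n, d (n + (k + 1)) * s ^ n| ≤ ∑' n, d n := by
        rw [abs_of_nonneg (tsum_nonneg (fun n => mul_nonneg (hd0 _) (pow_nonneg hs0 _)))]
        exact shift_bound hd0 hds (k + 1) hs0 hs1
      calc |s * (∑' n, d (n + (k + 1)) * s ^ n) - s * (∑' n, c (n + (k + 1)) * s ^ n)|
          ≤ |s * (∑' n, d (n + (k + 1)) * s ^ n)| + |s * (∑' n, c (n + (k + 1)) * s ^ n)| :=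
            abs_sub _ _
        _ = s * |∑' n, d (n + (k + 1)) * s ^ n| + s * |∑' n, c (n + (k + 1)) * s ^ n| := by
            rw [abs_mul, abs_mul, abs_of_nonneg hs0]
        _ ≤ s * (∑' n, d n) + s * (∑' n, c n) := by
            have := mul_le_mul_of_nonneg_left hA hs0
            have := mul_le_mul_of_nonneg_left hB hs0
            linarith
        _ = M * s := by rw [hM]; ring
    -- let s → 0
    have hseq : ∀ j : ℕ, |c k - d k| ≤ M * (1 / (j + 1)) := by
      intro j
      refine hbound (1 / (j + 1)) ⟨by positivity, ?_⟩
      rw [div_le_one (by positivity)]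
      have : (0 : ℝ) ≤ (j : ℝ) := Nat.cast_nonneg j
      linarith
    have htend : Filter.Tendsto (fun j : ℕ => M * (1 / (j + 1))) Filter.atTop (nhds 0) := by
      have := tendsto_one_div_add_atTop_nhds_zero_nat.const_mul M
      simpa using this
    have : |c k - d k| ≤ 0 := ge_of_tendsto' htend hseq
    have : c k - d k = 0 := abs_eq_zero.mp (le_antisymm this (abs_nonneg _))
    linarith
  -- step 2 : the shifted equality propagates
  have step2 : ∀ k, (∀ s ∈ Set.Ioc (0 : ℝ) 1,
      ∑' n, c (n + k) * s ^ n = ∑' n, d (n + k) * s ^ n) →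
      (∀ s ∈ Set.Ioc (0 : ℝ) 1,
      ∑' n, c (n + (k + 1)) * s ^ n = ∑' n, d (n + (k + 1)) * s ^ n) := by
    intro k hk s hs
    have hck := step1 k hk
    have h1 := hk s hs
    rw [shift_split hc0 hcs k hs.1.le hs.2, shift_split hd0 hds k hs.1.le hs.2, hck] at h1
    have h2 : s * (∑' n, c (n + (k + 1)) * s ^ n) = s * (∑' n, d (n + (k + 1)) * s ^ n) := by
      linarith
    exact mul_left_cancel₀ (ne_of_gt hs.1) h2
  have hH : ∀ k, ∀ s ∈ Set.Ioc (0 : ℝ) 1,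
      ∑' n, c (n + k) * s ^ n = ∑' n, d (n + k) * s ^ n := by
    intro k
    induction k with
    | zero => simpa using h
    | succ k ih => exact step2 k ih
  exact fun k => step1 k (hH k)

end Aux

/-- if `X` is a non-negative integer-valued random variable that is not
Poisson distributed (for any rate, including rate 0, i.e. the point mass at 0), with
factorial cumulant generating function `C` continuous on `[0,2]` with `C(0) = 0`, and
`a ∈ [0,1]`, `b ∈ ℝ` satisfy `C(at) - bt = C(t)` for all `t ∈ [0,2]`, then
`a = 1` and `b = 0`. -/
theorem equate_thinning_shift (p : PMF ℕ)
    (hnotPoisson : ∀ μ : ℝ≥0, p ≠ ProbabilityTheory.poissonPMF μ)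
    (hcont : ContinuousOn (fcgf p) (Set.Icc 0 2)) (h0 : fcgf p 0 = 0)
    (a : ℝ) (ha : a ∈ Set.Icc (0 : ℝ) 1) (b : ℝ)
    (heq : ∀ t ∈ Set.Icc (0 : ℝ) 2, fcgf p (a * t) - b * t = fcgf p t) :
    a = 1 ∧ b = 0 := by
  obtain ⟨ha0, ha1⟩ := ha
  rcases eq_or_lt_of_le ha1 with rfl' | halt
  · -- a = 1
    subst rfl'
    refine ⟨rfl, ?_⟩
    have h1 := heq 1 (by norm_num)
    simp only [one_mul, mul_one] at h1
    linarith
  · -- a < 1 : contradiction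
    exfalso
    set q : ℕ → ℝ := fun n => (p n).toReal with hq
    have hq0 : ∀ n, 0 ≤ q n := fun n => ENNReal.toReal_nonneg
    have hqs : Summable q := by
      refine ENNReal.summable_toReal ?_
      rw [p.tsum_coe]; exact ENNReal.one_ne_top
    have hq1 : ∑' n, q n = 1 := by
      have := ENNReal.tsum_toReal_eq (fun n => p.apply_ne_top n)
      rw [p.tsum_coe] at this
      simpa [hq] using this.symm
    -- the functional equation forces linearity of the fcgf
    set μ : ℝ := b * (1 - a)⁻¹ with hμ
    have key : ∀ t ∈ Set.Icc (0 : ℝ) 2, fcgf p t = -(μ * t) := by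
      intro t ht
      have hmem : ∀ n : ℕ, a ^ n * t ∈ Set.Icc (0 : ℝ) 2 := by
        intro n
        refine ⟨by have := ht.1; positivity, ?_⟩
        calc a ^ n * t ≤ 1 * t :=
              mul_le_mul_of_nonneg_right (pow_le_one₀ ha0 ha1) ht.1
          _ = t := one_mul t
          _ ≤ 2 := ht.2
      have iter : ∀ n : ℕ,
          fcgf p t = fcgf p (a ^ n * t) - b * t * ∑ k ∈ Finset.range n, a ^ k := by
        intro n
        induction n with
        | zero => simp
        | succ n ih =>
          have h2 := heq (a ^ n * t) (hmem n)
          have h3 : a * (a ^ n * t) = a ^ (n + 1) * t := by ring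
          rw [h3] at h2
          rw [ih, Finset.sum_range_succ, ← h2]
          ring
      have htend1 : Filter.Tendsto (fun n : ℕ => a ^ n * t) Filter.atTop (nhds 0) := by
        simpa using (tendsto_pow_atTop_nhds_zero_of_lt_one ha0 halt).mul_const t
      have htend1' : Filter.Tendsto (fun n : ℕ => a ^ n * t) Filter.atTop
          (nhdsWithin 0 (Set.Icc 0 2)) :=
        tendsto_nhdsWithin_of_tendsto_nhds_of_eventually_within _ htend1
          (Filter.Eventually.of_forall hmem)
      have hc0 : ContinuousWithinAt (fcgf p) (Set.Icc 0 2) 0 :=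
        hcont 0 (by constructor <;> norm_num)
      have htend2 : Filter.Tendsto (fun n : ℕ => fcgf p (a ^ n * t)) Filter.atTop (nhds 0) := by
        have := hc0.tendsto.comp htend1'
        rwa [h0] at this
      have htend3 : Filter.Tendsto (fun n : ℕ => ∑ k ∈ Finset.range n, a ^ k)
          Filter.atTop (nhds (1 - a)⁻¹) :=
        (hasSum_geometric_of_lt_one ha0 halt).tendsto_sum_nat
      have htend4 : Filter.Tendsto
          (fun n : ℕ => fcgf p (a ^ n * t) - b * t * ∑ k ∈ Finset.range n, a ^ k)
          Filter.atTop (nhds (0 - b * t * (1 - a)⁻¹)) :=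
        htend2.sub (htend3.const_mul (b * t))
      have hconst : Filter.Tendsto (fun _ : ℕ => fcgf p t) Filter.atTop
          (nhds (0 - b * t * (1 - a)⁻¹)) :=
        htend4.congr (fun n => (iter n).symm)
      have := tendsto_nhds_unique hconst tendsto_const_nhds
      rw [← this, hμ]; ring
    -- positivity of the generating function on [0,1)
    obtain ⟨m, hm⟩ := p.support_nonempty
    have hqm : 0 < q m := ENNReal.toReal_pos hm (p.apply_ne_top m)
    have hψpos : ∀ t : ℝ, 0 ≤ t → t < 1 → 0 < ∑' n, q n * (1 - t) ^ n := by
      intro t ht0 ht1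
      have hsumm : Summable (fun n => q n * (1 - t) ^ n) := by
        simpa using shift_summable hq0 hqs 0 (by linarith) (by linarith)
      exact Summable.tsum_pos hsumm (fun n => mul_nonneg (hq0 n) (pow_nonneg (by linarith) n)) m
        (mul_pos hqm (pow_pos (by linarith) m))
    have hψexp : ∀ t : ℝ, 0 ≤ t → t < 1 →
        ∑' n, q n * (1 - t) ^ n = Real.exp (-(μ * t)) := by
      intro t ht0 ht1
      have hk := key t ⟨ht0, by linarith⟩
      have hpos := hψpos t ht0 ht1
      have : Real.log (∑' n, q n * (1 - t) ^ n) = -(μ * t) := hk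
      rw [← this, Real.exp_log hpos]
    -- μ is nonnegative
    have hμ0 : 0 ≤ μ := by
      have h12 : ∑' n, q n * (1 - (1/2 : ℝ)) ^ n ≤ 1 := by
        have hsum2 : Summable (fun n => q n * (1 - (1/2 : ℝ)) ^ n) := by
          simpa using shift_summable hq0 hqs 0 (by norm_num) (by norm_num)
        have hle : ∀ n, q n * (1 - (1/2 : ℝ)) ^ n ≤ q n := fun n =>
          mul_le_of_le_one_right (hq0 n) (pow_le_one₀ (by norm_num) (by norm_num))
        calc ∑' n, q n * (1 - (1/2 : ℝ)) ^ n ≤ ∑' n, q n := Summable.tsum_le_tsum hle hsum2 hqs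
          _ = 1 := hq1
      rw [hψexp (1/2) (by norm_num) (by norm_num)] at h12
      have := Real.exp_le_one_iff.mp h12
      linarith
    set r : ℝ≥0 := Real.toNNReal μ with hr
    have hrμ : (r : ℝ) = μ := Real.coe_toNNReal μ hμ0
    set d : ℕ → ℝ := ProbabilityTheory.poissonPMFReal r with hd
    have hd0 : ∀ n, 0 ≤ d n := fun n => ProbabilityTheory.poissonPMFReal_nonneg
    have hdsum : HasSum d 1 := ProbabilityTheory.poissonPMFRealSum r
    have hds : Summable d := hdsum.summable
    -- the two power series agree on (0,1]
    have hagree : ∀ s ∈ Set.Ioc (0 : ℝ) 1, ∑' n, q n * s ^ n = ∑' n, d n * s ^ n := by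
      intro s hs
      have ht0 : (0 : ℝ) ≤ 1 - s := by linarith [hs.2]
      have ht1 : 1 - s < 1 := by linarith [hs.1]
      have hL : ∑' n, q n * s ^ n = Real.exp (-(μ * (1 - s))) := by
        have := hψexp (1 - s) ht0 ht1
        simpa using this
      have hR : ∑' n, d n * s ^ n = Real.exp (-(μ * (1 - s))) := by
        have hterm : ∀ n : ℕ, d n * s ^ n = Real.exp (-μ) * ((μ * s) ^ n / (Nat.factorial n : ℝ)) := by
          intro n
          simp only [hd, ProbabilityTheory.poissonPMFReal, hrμ]
          ring
        calc ∑' n, d n * s ^ n = ∑' n, Real.exp (-μ) * ((μ * s) ^ n / (Nat.factorial n : ℝ)) :=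
              tsum_congr hterm
          _ = Real.exp (-μ) * ∑' n, (μ * s) ^ n / (Nat.factorial n : ℝ) := tsum_mul_left
          _ = Real.exp (-μ) * Real.exp (μ * s) := by
              congr 1
              rw [Real.exp_eq_exp_ℝ, NormedSpace.exp_eq_tsum_div]
          _ = Real.exp (-(μ * (1 - s))) := by
              rw [← Real.exp_add]; ring_nf
      rw [hL, hR]
    have hqd : ∀ n, q n = d n := coeff_eq hq0 hd0 hqs hds hagree
    -- conclude p is Poisson
    refine hnotPoisson r ?_
    ext n
    have h1 : p n = ENNReal.ofReal (q n) := (ENNReal.ofReal_toReal (p.apply_ne_top n)).symm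
    rw [h1, hqd n]
    rfl
end

section
/- Suppose (a_n)_{n≥1} is a sequence in (0,1] that is completely multiplicative (a_{nm} = a_n a_m for all n,m) and (weakly) decreasing. Then there exists β ≤ 0 such that a_n = n^β for all n. -/
/-- a completely multiplicative, weakly decreasing sequence
`(a_n)_{n≥1}` with values in `(0,1]` must be of the form `a_n = n^β` for
some `β ≤ 0`. -/
theorem multiplicative_decreasing_is_power (a : ℕ → ℝ)
    (hrange : ∀ n, 1 ≤ n → a n ∈ Set.Ioc (0 : ℝ) 1)
    (hmul : ∀ n m, 1 ≤ n → 1 ≤ m → a (n * m) = a n * a m)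
    (hdec : ∀ n m, 1 ≤ n → n ≤ m → a m ≤ a n) :
    ∃ β : ℝ, β ≤ 0 ∧ ∀ n, 1 ≤ n → a n = (n : ℝ) ^ β := by
  have hpos : ∀ n, 1 ≤ n → 0 < a n := fun n hn => (hrange n hn).1
  have hle1 : ∀ n, 1 ≤ n → a n ≤ 1 := fun n hn => (hrange n hn).2
  have ha1 : a 1 = 1 := by
    have h1 := hmul 1 1 le_rfl le_rfl
    rw [one_mul] at h1
    have := mul_left_cancel₀ (hpos 1 le_rfl).ne'
      (show a 1 * 1 = a 1 * a 1 by rw [mul_one]; exact h1)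
    exact this.symm
  have hpow : ∀ n, 1 ≤ n → ∀ k : ℕ, a (n ^ k) = (a n) ^ k := by
    intro n hn k
    induction k with
    | zero => simpa using ha1
    | succ k ih =>
      rw [pow_succ, pow_succ, hmul _ n (Nat.one_le_pow _ _ hn) hn, ih]
  set β : ℝ := Real.log (a 2) / Real.log 2 with hβ
  have hlog2 : (0:ℝ) < Real.log 2 := Real.log_pos one_lt_two
  have hla2 : Real.log (a 2) ≤ 0 := Real.log_nonpos (hpos 2 one_le_two).le (hle1 2 one_le_two)
  refine ⟨β, div_nonpos_of_nonpos_of_nonneg hla2 hlog2.le, ?_⟩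
  intro n hn
  have hnR : (0:ℝ) < (n:ℝ) := by exact_mod_cast hn
  have hanpos : 0 < a n := hpos n hn
  -- key estimate
  have key : ∀ k : ℕ, 1 ≤ k →
      |Real.log (a n) - β * Real.log n| * k ≤ -Real.log (a 2) := by
    intro k hk
    have hlogn : 0 ≤ Real.log n := Real.log_nonneg (by exact_mod_cast hn)
    set x : ℝ := k * Real.log n / Real.log 2 with hx
    have hx0 : 0 ≤ x := by positivity
    set j : ℕ := ⌊x⌋₊ with hjdef
    have hj : (j:ℝ) ≤ x := Nat.floor_le hx0
    have hj' : x < j + 1 := Nat.lt_floor_add_one x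
    have hxl2 : x * Real.log 2 = (k:ℝ) * Real.log n := by
      rw [hx]; field_simp
    -- 2^j ≤ n^k
    have h1 : (2:ℕ) ^ j ≤ n ^ k := by
      have hR : ((2:ℝ)) ^ j ≤ (n:ℝ) ^ k := by
        rw [← Real.log_le_log_iff (by positivity) (by positivity),
          Real.log_pow, Real.log_pow]
        nlinarith [mul_le_mul_of_nonneg_right hj hlog2.le]
      exact_mod_cast hR
    -- n^k < 2^(j+1)
    have h2 : n ^ k < 2 ^ (j + 1) := by
      have hR : (n:ℝ) ^ k < (2:ℝ) ^ (j + 1) := by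
        rw [← Real.log_lt_log_iff (by positivity) (by positivity),
          Real.log_pow, Real.log_pow]
        push_cast
        nlinarith [mul_lt_mul_of_pos_right hj' hlog2]
      exact_mod_cast hR
    have h2j : 1 ≤ 2 ^ j := Nat.one_le_two_pow
    have hnk : 1 ≤ n ^ k := Nat.one_le_pow _ _ hn
    have hA : a (n ^ k) ≤ a (2 ^ j) := hdec _ _ h2j h1
    have hB : a (2 ^ (j+1)) ≤ a (n ^ k) := hdec _ _ hnk h2.le
    rw [hpow n hn k, hpow 2 one_le_two j] at hA
    rw [hpow n hn k, hpow 2 one_le_two (j+1)] at hB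
    have hA' : (k:ℝ) * Real.log (a n) ≤ (j:ℝ) * Real.log (a 2) := by
      have := Real.log_le_log (pow_pos hanpos k) hA
      rwa [Real.log_pow, Real.log_pow] at this
    have hB' : ((j:ℝ) + 1) * Real.log (a 2) ≤ (k:ℝ) * Real.log (a n) := by
      have := Real.log_le_log (pow_pos (hpos 2 one_le_two) (j+1)) hB
      rw [Real.log_pow, Real.log_pow] at this
      push_cast at this
      linarith
    have hxl : x * Real.log (a 2) = (k:ℝ) * (β * Real.log n) := by
      rw [hβ]
      field_simp
      nlinarith [hxl2]
    have habs : |Real.log (a n) - β * Real.log n| * k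
        = |(k:ℝ) * Real.log (a n) - x * Real.log (a 2)| := by
      rw [show |Real.log (a n) - β * Real.log ↑n| * (k:ℝ)
          = |(Real.log (a n) - β * Real.log ↑n) * k| by rw [abs_mul, Nat.abs_cast]]
      congr 1
      rw [sub_mul, hxl]; ring
    rw [habs, abs_le]
    constructor <;>
      nlinarith [mul_le_mul_of_nonpos_right hj hla2,
        mul_le_mul_of_nonpos_right hj'.le hla2]
  -- deduce equality of logs
  have hzero : Real.log (a n) - β * Real.log n = 0 := by
    by_contra h
    have hc : 0 < |Real.log (a n) - β * Real.log n| := abs_pos.mpr h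
    obtain ⟨k, hk⟩ := exists_nat_gt
      (max 1 ((-Real.log (a 2)) / |Real.log (a n) - β * Real.log n|))
    have hk1 : 1 ≤ k := by
      have := le_max_left 1 ((-Real.log (a 2)) / |Real.log (a n) - β * Real.log n|)
      have : (1:ℝ) < k := lt_of_le_of_lt this hk
      exact_mod_cast this.le
    have hkey := key k hk1
    have hk2 : (-Real.log (a 2)) / |Real.log (a n) - β * Real.log n| < k :=
      lt_of_le_of_lt (le_max_right _ _) hk
    rw [div_lt_iff₀ hc] at hk2
    nlinarith
  have hlogeq : Real.log (a n) = β * Real.log n := by linarith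
  rw [← Real.exp_log hanpos, hlogeq, Real.rpow_def_of_pos hnR, mul_comm]
end
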